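/- Let λ = α + γi be a complex number with α > 0 and γ > 0, let β = √(α² + γ²), and let φ ∈ (0, π/2) satisfy cos φ = α/β. Let n ≥ 2 be the integer with nφ < π ≤ (n+1)φ. Then the polynomial g(x) = Σ_{k=0}^{n-1} β^{n-1-k} sin((k+1)φ) x^k has all coefficients positive, and the product (x² - 2αx + β²)·g(x) has all coefficients nonnegative with positive leading and constant coefficients. -/
import Mathlib


open Polynomial Real

theorem stmt3 (α γ β φ : ℝ) (hα : 0 < α) (hγ : 0 < γ)
    (hβ : β = Real.sqrt (α ^ 2 + γ ^ 2))
    (hφ0 : 0 < φ) (hφ1 : φ < Real.pi / 2) (hcos : Real.cos φ = α / β)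
    (n : ℕ) (hn : 2 ≤ n) (hlt : (n : ℝ) * φ < Real.pi) (hle : Real.pi ≤ ((n : ℝ) + 1) * φ)
    (g : Polynomial ℝ)
    (hg : g = ∑ k ∈ Finset.range n, C (β ^ (n - 1 - k) * Real.sin (((k : ℝ) + 1) * φ)) * X ^ k) :
    (∀ k ≤ n - 1, 0 < g.coeff k) ∧
    (∀ k, 0 ≤ ((X ^ 2 - C (2 * α) * X + C (β ^ 2)) * g).coeff k) ∧
    0 < ((X ^ 2 - C (2 * α) * X + C (β ^ 2)) * g).coeff 0 ∧
    0 < ((X ^ 2 - C (2 * α) * X + C (β ^ 2)) * g).leadingCoeff := by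
  have hπ := Real.pi_pos
  have hβpos : 0 < β := by
    rw [hβ]
    exact Real.sqrt_pos.mpr (by positivity)
  have hαβ : β * Real.cos φ = α := by
    rw [hcos]; field_simp
  have hsinφ : 0 < Real.sin φ := Real.sin_pos_of_pos_of_lt_pi hφ0 (by linarith)
  have key : ∀ x : ℝ, Real.sin (x - φ) - 2 * Real.cos φ * Real.sin x + Real.sin (x + φ) = 0 := by
    intro x; rw [Real.sin_sub, Real.sin_add]; ring
  have hgc : ∀ k, g.coeff k = if k < n then β ^ (n - 1 - k) * Real.sin (((k : ℝ) + 1) * φ) else 0 := by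
    intro k
    rw [hg]
    simp only [finset_sum_coeff, coeff_C_mul, coeff_X_pow, mul_ite, mul_one, mul_zero]
    rw [Finset.sum_ite_eq (Finset.range n) k]
    simp [Finset.mem_range]
  have hgpos : ∀ k, k < n → 0 < g.coeff k := by
    intro k hk
    rw [hgc k, if_pos hk]
    have h1 : 0 < ((k : ℝ) + 1) * φ := by positivity
    have h2 : ((k : ℝ) + 1) * φ < Real.pi := by
      have : ((k : ℝ) + 1) ≤ (n : ℝ) := by exact_mod_cast hk
      nlinarith
    exact mul_pos (pow_pos hβpos _) (Real.sin_pos_of_pos_of_lt_pi h1 h2)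
  set p := (X ^ 2 - C (2 * α) * X + C (β ^ 2)) * g with hp
  have hpc : ∀ m, p.coeff m =
      (if 2 ≤ m then g.coeff (m - 2) else 0)
      - 2 * α * (if 1 ≤ m then g.coeff (m - 1) else 0)
      + β ^ 2 * g.coeff m := by
    intro m
    have hpe : p = g * X ^ 2 - C (2 * α) * (g * X ^ 1) + C (β ^ 2) * g := by
      rw [hp]; ring
    rw [hpe]
    simp only [coeff_add, coeff_sub, coeff_mul_X_pow', coeff_C_mul, mul_ite, mul_zero]
  -- coefficient 0
  have hc0 : p.coeff 0 = β ^ 2 * (β ^ (n - 1) * Real.sin φ) := by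
    rw [hpc 0]
    simp [hgc 0, show 0 < n by omega]
  have hc0pos : 0 < p.coeff 0 := by
    rw [hc0]; positivity
  -- coefficient 1 is zero
  have hc1 : p.coeff 1 = 0 := by
    rw [hpc 1]
    simp only [show ¬ (2 ≤ 1) by omega, if_false, if_pos le_rfl]
    rw [hgc 0, hgc 1, if_pos (show 0 < n by omega), if_pos (show 1 < n by omega)]
    have e1 : n - 1 - 0 = (n - 1 - 1) + 1 := by omega
    rw [e1, pow_succ]
    norm_num
    rw [Real.sin_two_mul]
    linear_combination (2 * β ^ (n - 1 - 1) * β * Real.sin φ) * hαβ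
  -- middle coefficients are zero
  have hmid : ∀ m, 2 ≤ m → m < n → p.coeff m = 0 := by
    intro m h2 hmn
    rw [hpc m]
    rw [if_pos h2, if_pos (show 1 ≤ m by omega)]
    rw [hgc (m - 2), hgc (m - 1), hgc m,
      if_pos (show m - 2 < n by omega), if_pos (show m - 1 < n by omega), if_pos hmn]
    have e1 : n - 1 - (m - 2) = (n - 1 - m) + 2 := by omega
    have e2 : n - 1 - (m - 1) = (n - 1 - m) + 1 := by omega
    have c1 : (((m - 2 : ℕ) : ℝ) + 1) * φ = (m : ℝ) * φ - φ := by
      rw [Nat.cast_sub (by omega)]; push_cast; ring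
    have c2 : (((m - 1 : ℕ) : ℝ) + 1) * φ = (m : ℝ) * φ := by
      rw [Nat.cast_sub (by omega)]; push_cast; ring
    have c3 : ((m : ℝ) + 1) * φ = (m : ℝ) * φ + φ := by ring
    rw [e1, e2, c1, c2, c3, pow_succ, pow_succ]
    linear_combination (β ^ (n - 1 - m) * β ^ 2) * key ((m : ℝ) * φ)
      + (2 * β ^ (n - 1 - m) * β * Real.sin ((m : ℝ) * φ)) * hαβ
  -- coefficient n
  have hsin1 : Real.sin (((n : ℝ) + 1) * φ) ≤ 0 := by
    have h1 : Real.sin (((n : ℝ) + 1) * φ - Real.pi) = -Real.sin (((n : ℝ) + 1) * φ) :=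
      Real.sin_sub_pi _
    have h2 : 0 ≤ Real.sin (((n : ℝ) + 1) * φ - Real.pi) := by
      apply Real.sin_nonneg_of_nonneg_of_le_pi <;> nlinarith
    linarith
  have hcn : p.coeff n = -(β * Real.sin (((n : ℝ) + 1) * φ)) := by
    rw [hpc n]
    rw [if_pos (show 2 ≤ n by omega), if_pos (show 1 ≤ n by omega)]
    rw [hgc (n - 2), hgc (n - 1), hgc n,
      if_pos (show n - 2 < n by omega), if_pos (show n - 1 < n by omega),
      if_neg (lt_irrefl n)]
    have e1 : n - 1 - (n - 2) = 1 := by omega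
    have e2 : n - 1 - (n - 1) = 0 := by omega
    have c1 : (((n - 2 : ℕ) : ℝ) + 1) * φ = (n : ℝ) * φ - φ := by
      rw [Nat.cast_sub (by omega)]; push_cast; ring
    have c2 : (((n - 1 : ℕ) : ℝ) + 1) * φ = (n : ℝ) * φ := by
      rw [Nat.cast_sub (by omega)]; push_cast; ring
    rw [e1, e2, c1, c2, pow_one, pow_zero]
    have hk := key ((n : ℝ) * φ)
    have c3 : ((n : ℝ) + 1) * φ = (n : ℝ) * φ + φ := by ring
    rw [c3]
    linear_combination β * key ((n : ℝ) * φ) + (2 * Real.sin ((n : ℝ) * φ)) * hαβ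
  have hcnpos : 0 ≤ p.coeff n := by
    rw [hcn]
    have h := mul_nonneg hβpos.le (neg_nonneg.mpr hsin1)
    linarith [h]
  -- coefficient n+1
  have hcn1 : p.coeff (n + 1) = Real.sin ((n : ℝ) * φ) := by
    rw [hpc (n + 1)]
    rw [if_pos (show 2 ≤ n + 1 by omega), if_pos (show 1 ≤ n + 1 by omega)]
    rw [show n + 1 - 2 = n - 1 by omega, show n + 1 - 1 = n from rfl]
    rw [hgc (n - 1), hgc n, hgc (n + 1),
      if_pos (show n - 1 < n by omega), if_neg (lt_irrefl n),
      if_neg (show ¬ (n + 1 < n) by omega)]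
    have e2 : n - 1 - (n - 1) = 0 := by omega
    have c2 : (((n - 1 : ℕ) : ℝ) + 1) * φ = (n : ℝ) * φ := by
      rw [Nat.cast_sub (by omega)]; push_cast; ring
    rw [e2, c2, pow_zero]
    ring
  have hsinn : 0 < Real.sin ((n : ℝ) * φ) := by
    apply Real.sin_pos_of_pos_of_lt_pi _ hlt
    have : (0 : ℝ) < (n : ℝ) := by exact_mod_cast (show 0 < n by omega)
    positivity
  -- high coefficients are zero
  have hhigh : ∀ m, n + 1 < m → p.coeff m = 0 := by
    intro m hm
    rw [hpc m]
    rw [hgc (m - 2), hgc (m - 1), hgc m,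
      if_neg (show ¬ (m - 2 < n) by omega), if_neg (show ¬ (m - 1 < n) by omega),
      if_neg (show ¬ (m < n) by omega)]
    simp
  -- all coefficients nonneg
  have hnonneg : ∀ m, 0 ≤ p.coeff m := by
    intro m
    rcases lt_trichotomy m n with hmn | rfl | hmn
    · rcases Nat.lt_or_ge m 2 with h2 | h2
      · interval_cases m
        · exact le_of_lt hc0pos
        · rw [hc1]
      · rw [hmid m h2 hmn]
    · exact hcnpos
    · rcases Nat.lt_or_ge m (n + 2) with h2 | h2
      · have : m = n + 1 := by omega
        rw [this, hcn1]; exact le_of_lt hsinn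
      · rw [hhigh m (by omega)]
  -- leading coefficient
  have hdeg_le : p.natDegree ≤ n + 1 := by
    apply natDegree_le_iff_coeff_eq_zero.mpr
    intro m hm
    exact hhigh m hm
  have hne : p.coeff (n + 1) ≠ 0 := by
    rw [hcn1]; exact ne_of_gt hsinn
  have hdeg_ge : n + 1 ≤ p.natDegree := le_natDegree_of_ne_zero hne
  have hdeg : p.natDegree = n + 1 := le_antisymm hdeg_le hdeg_ge
  refine ⟨?_, hnonneg, hc0pos, ?_⟩
  · intro k hk
    exact hgpos k (by omega)
  · rw [leadingCoeff, hdeg, hcn1]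
    exact hsinn
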